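/- Let g(x) = e^{1/x} · x^{1 + 1/(2x)} · e^{-1}, let m ≥ 1 be an integer, and let s_1, …, s_m be real numbers each greater than 1 with ∑_{β=1}^m s_β = r. Then ∑_{β=1}^m g(s_β) ≤ m · g(r/m). -/

import Mathlib

open Real Set

noncomputable def gfun (x : ℝ) : ℝ := Real.exp (x⁻¹ - 1 + (1 + (2*x)⁻¹) * Real.log x)

lemma gfun_eq {x : ℝ} (hx : 0 < x) :
    Real.exp (1 / x) * x ^ (1 + 1 / (2 * x)) * Real.exp (-1) = gfun x := by
  rw [Real.rpow_def_of_pos hx, gfun, ← Real.exp_add, ← Real.exp_add]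
  ring_nf

noncomputable def ufun (x : ℝ) : ℝ := x⁻¹ - 1 + (1 + (2*x)⁻¹) * Real.log x

noncomputable def vfun (x : ℝ) : ℝ := x⁻¹ - (1 + Real.log x) / (2 * x^2)

noncomputable def gd1 (x : ℝ) : ℝ := Real.exp (ufun x) * vfun x

noncomputable def gd2 (x : ℝ) : ℝ :=
  Real.exp (ufun x) * (-(1 / (2 * x^3)) + (1 + Real.log x)^2 / (4 * x^4))

lemma hasDerivAt_ufun {x : ℝ} (hx : 0 < x) : HasDerivAt ufun (vfun x) x := by
  have hinv : HasDerivAt (fun y : ℝ => y⁻¹) (-(x^2)⁻¹) x := by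
    simpa using hasDerivAt_inv hx.ne'
  have h2x : HasDerivAt (fun y : ℝ => (2*y)⁻¹) (-(2 / (2*x)^2)) x := by
    have := (hasDerivAt_inv (x := 2*x) (by positivity)).comp x
      ((hasDerivAt_id x).const_mul 2)
    simpa [Function.comp_def, div_eq_mul_inv, mul_comm] using this
  have hlog : HasDerivAt Real.log x⁻¹ x := Real.hasDerivAt_log hx.ne'
  have h := (hinv.sub_const 1).add ((h2x.const_add 1).mul hlog)
  refine h.congr_deriv ?_
  unfold vfun
  field_simp
  ring

lemma hasDerivAt_vfun {x : ℝ} (hx : 0 < x) :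
    HasDerivAt vfun (-(x^2)⁻¹ + (1 + 2 * Real.log x) / (2 * x^3)) x := by
  have hinv : HasDerivAt (fun y : ℝ => y⁻¹) (-(x^2)⁻¹) x := by
    simpa using hasDerivAt_inv hx.ne'
  have hnum : HasDerivAt (fun y : ℝ => 1 + Real.log y) x⁻¹ x :=
    (Real.hasDerivAt_log hx.ne').const_add 1
  have hden : HasDerivAt (fun y : ℝ => 2 * y^2) (2 * (2*x)) x := by
    simpa [mul_comm, mul_assoc] using (hasDerivAt_pow 2 x).const_mul 2
  have hq := hnum.div hden (by positivity)
  have h := hinv.sub hq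
  refine h.congr_deriv ?_
  field_simp
  ring

lemma hasDerivAt_gfun {x : ℝ} (hx : 0 < x) : HasDerivAt gfun (gd1 x) x :=
  (hasDerivAt_ufun hx).exp

lemma hasDerivAt_gd1 {x : ℝ} (hx : 0 < x) : HasDerivAt gd1 (gd2 x) x := by
  have h := ((hasDerivAt_ufun hx).exp.mul (hasDerivAt_vfun hx))
  refine h.congr_deriv ?_
  unfold gd2 vfun
  have hx2 : (x:ℝ)^2 ≠ 0 := by positivity
  field_simp
  ring

lemma key_ineq {x : ℝ} (hx : 1 ≤ x) : (1 + Real.log x)^2 ≤ 2 * x := by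
  set φ : ℝ → ℝ := fun y => 2 * y - (1 + Real.log y)^2 with hφ
  have hmono : MonotoneOn φ (Ici 1) := by
    apply monotoneOn_of_deriv_nonneg (convex_Ici 1)
    · apply ContinuousOn.sub (by fun_prop)
      apply ContinuousOn.pow
      exact continuousOn_const.add (Real.continuousOn_log.mono (by
        intro y hy; simp at hy ⊢; linarith))
    · intro y hy
      rw [interior_Ici] at hy
      have hy0 : (0:ℝ) < y := lt_trans one_pos hy
      have : HasDerivAt φ (2 - 2 * (1 + Real.log y) * y⁻¹) y := by
        have h1 : HasDerivAt (fun z : ℝ => 2 * z) 2 y := by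
          simpa using (hasDerivAt_id y).const_mul 2
        have h2 : HasDerivAt (fun z : ℝ => (1 + Real.log z)^2)
            (2 * (1 + Real.log y) * y⁻¹) y := by
          have := ((Real.hasDerivAt_log hy0.ne').const_add 1).pow 2
          refine this.congr_deriv ?_
          ring
        exact h1.sub h2
      exact this.differentiableAt.differentiableWithinAt
    · intro y hy
      rw [interior_Ici] at hy
      have hy0 : (0:ℝ) < y := lt_trans one_pos hy
      have hd : HasDerivAt φ (2 - 2 * (1 + Real.log y) * y⁻¹) y := by
        have h1 : HasDerivAt (fun z : ℝ => 2 * z) 2 y := by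
          simpa using (hasDerivAt_id y).const_mul 2
        have h2 : HasDerivAt (fun z : ℝ => (1 + Real.log z)^2)
            (2 * (1 + Real.log y) * y⁻¹) y := by
          have := ((Real.hasDerivAt_log hy0.ne').const_add 1).pow 2
          refine this.congr_deriv ?_
          ring
        exact h1.sub h2
      rw [hd.deriv]
      have hlog : Real.log y ≤ y - 1 := Real.log_le_sub_one_of_pos hy0
      have : 2 * (1 + Real.log y) * y⁻¹ ≤ 2 * y * y⁻¹ := by
        apply mul_le_mul_of_nonneg_right _ (by positivity)
        nlinarith
      rw [mul_inv_cancel_right₀ hy0.ne'] at this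
      linarith
  have h1 : φ 1 ≤ φ x := hmono (by simp) hx hx
  simp [hφ, Real.log_one] at h1
  linarith

lemma gd2_nonpos {x : ℝ} (hx : 1 < x) : gd2 x ≤ 0 := by
  have hx0 : (0:ℝ) < x := lt_trans one_pos hx
  have hkey := key_ineq hx.le
  have h : -(1 / (2 * x^3)) + (1 + Real.log x)^2 / (4 * x^4) ≤ 0 := by
    have hle : (1 + Real.log x)^2 / (4 * x^4) ≤ 1 / (2 * x^3) := by
      rw [div_le_div_iff₀ (by positivity) (by positivity)]
      nlinarith [pow_pos hx0 3]
    linarith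
  unfold gd2
  exact mul_nonpos_of_nonneg_of_nonpos (Real.exp_pos _).le h

lemma gfun_concave : ConcaveOn ℝ (Ici 1) gfun := by
  apply concaveOn_of_hasDerivWithinAt2_nonpos (f' := gd1) (f'' := gd2) (convex_Ici 1)
  · intro y hy
    exact (hasDerivAt_gfun (lt_of_lt_of_le one_pos hy)).continuousAt.continuousWithinAt
  · intro y hy
    rw [interior_Ici] at hy
    exact (hasDerivAt_gfun (lt_trans one_pos hy)).hasDerivWithinAt
  · intro y hy
    rw [interior_Ici] at hy
    exact (hasDerivAt_gd1 (lt_trans one_pos hy)).hasDerivWithinAt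
  · intro y hy
    rw [interior_Ici] at hy
    exact gd2_nonpos hy

/-- for `g(x) = e^(1/x) * x^(1 + 1/(2x)) * e^(-1)`, an integer `m ≥ 1`, and real
numbers `s_1, …, s_m`, each greater than 1, with `∑ β, s β = r`, one has
`∑ β, g (s β) ≤ m * g (r / m)`. -/
theorem sum_g_le_of_sum_eq (m : ℕ) (hm : 1 ≤ m) (s : Fin m → ℝ) (r : ℝ)
    (hs : ∀ β, 1 < s β) (hr : ∑ β, s β = r) :
    ∑ β, (Real.exp (1 / s β) * (s β) ^ (1 + 1 / (2 * s β)) * Real.exp (-1)) ≤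
      (m : ℝ) * (Real.exp (1 / (r / m)) * (r / m) ^ (1 + 1 / (2 * (r / m))) * Real.exp (-1)) := by
  have hm0 : (0:ℝ) < m := by exact_mod_cast hm
  have hjensen := gfun_concave.le_map_sum (t := Finset.univ) (w := fun _ : Fin m => (m:ℝ)⁻¹)
    (p := s) (fun i _ => inv_nonneg.mpr (Nat.cast_nonneg m))
    (by simp [Finset.card_univ]; field_simp) (fun i _ => (hs i).le)
  have hsum : ∑ i : Fin m, (m:ℝ)⁻¹ • s i = r / m := by
    rw [← Finset.smul_sum, hr, smul_eq_mul, div_eq_mul_inv, mul_comm]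
  rw [hsum] at hjensen
  have hrm : (0:ℝ) < r / m := by
    have hmr : (m:ℝ) < r := by
      rw [← hr]
      calc (m:ℝ) = ∑ _i : Fin m, (1:ℝ) := by simp
        _ < ∑ i, s i := by
          apply Finset.sum_lt_sum_of_nonempty
          · exact Finset.univ_nonempty_iff.mpr ⟨⟨0, hm⟩⟩
          · exact fun i _ => hs i
    exact div_pos (lt_trans hm0 hmr) hm0
  calc ∑ β, (Real.exp (1 / s β) * (s β) ^ (1 + 1 / (2 * s β)) * Real.exp (-1))
      = ∑ β, gfun (s β) := by
        refine Finset.sum_congr rfl fun i _ => gfun_eq (lt_trans one_pos (hs i))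
    _ ≤ (m:ℝ) * gfun (r / m) := by
        have := hjensen
        simp only [smul_eq_mul, ← Finset.mul_sum] at this
        calc ∑ β, gfun (s β) = (m:ℝ) * ((m:ℝ)⁻¹ * ∑ β, gfun (s β)) := by
              field_simp
          _ ≤ (m:ℝ) * gfun (r / m) := by
              apply mul_le_mul_of_nonneg_left _ hm0.le
              exact this
    _ = (m : ℝ) * (Real.exp (1 / (r / m)) * (r / m) ^ (1 + 1 / (2 * (r / m))) * Real.exp (-1)) := by
        rw [gfun_eq hrm]
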